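/- Let I ⊆ ℝ be an interval and let (a,b,c) : I → ℝ³ be a differentiable solution of the gauged bracket Bach flow. Then the function t ↦ a(t)² + b(t)² + c(t)² is nonincreasing on I; in particular a solution starting at time 0 remains in the closed Euclidean ball of radius √(a(0)² + b(0)² + c(0)²) for all later times in I. -/

import Mathlib

/-- First component of the right-hand side `F` of the gauged bracket Bach flow. -/
noncomputable def Fa (a b c : ℝ) : ℝ :=
  -(a / 48) * (44*a^4 + 72*a^2*b^2 - 5*a^2*c^2 + 28*b^4 + 24*b^2*c^2 - 4*c^4)

/-- Second component of the right-hand side `F` of the gauged bracket Bach flow. -/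
noncomputable def Fb (a b c : ℝ) : ℝ :=
  -(b / 48) * (60*a^4 + 104*a^2*b^2 + 57*a^2*c^2 + 44*b^4 + 104*b^2*c^2 + 60*c^4)

/-- Third component of the right-hand side `F` of the gauged bracket Bach flow. -/
noncomputable def Fc (a b c : ℝ) : ℝ :=
  -(c / 48) * (-4*a^4 + 24*a^2*b^2 - 5*a^2*c^2 + 28*b^4 + 72*b^2*c^2 + 44*c^4)

/-- `(a,b,c) : ℝ → ℝ³` is a differentiable solution of the gauged bracket Bach
flow on the set `S ⊆ ℝ`. -/
def IsBachFlowSolution (a b c : ℝ → ℝ) (S : Set ℝ) : Prop :=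
  ∀ t ∈ S,
    HasDerivAt a (Fa (a t) (b t) (c t)) t ∧
    HasDerivAt b (Fb (a t) (b t) (c t)) t ∧
    HasDerivAt c (Fc (a t) (b t) (c t)) t

lemma key_ineq (x y z : ℝ) (hx : 0 ≤ x) (hy : 0 ≤ y) (hz : 0 ≤ z) :
    0 ≤ 44*(x^3+y^3+z^3)+132*(x^2*y+x*y^2+y^2*z+y*z^2)-9*(x^2*z+x*z^2)+105*(x*y*z) := by
  nlinarith [mul_nonneg hx (sq_nonneg (x - z)), mul_nonneg hz (sq_nonneg (x - z)),
    mul_nonneg (mul_nonneg hx hy) hz, mul_nonneg (mul_nonneg hx hx) hz,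
    mul_nonneg (mul_nonneg hx hz) hz, mul_nonneg hy (sq_nonneg x), mul_nonneg hy (sq_nonneg z),
    mul_nonneg hx (sq_nonneg y), mul_nonneg hz (sq_nonneg y)]

lemma deriv_nonpos (a b c : ℝ) :
    2 * a * Fa a b c + 2 * b * Fb a b c + 2 * c * Fc a b c ≤ 0 := by
  have h := key_ineq (a^2) (b^2) (c^2) (sq_nonneg a) (sq_nonneg b) (sq_nonneg c)
  simp only [Fa, Fb, Fc]
  nlinarith [h]

/-- along a solution of the gauged bracket Bach flow on an interval,
the squared norm `a² + b² + c²` is nonincreasing; in particular a solution starting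
at time `0` remains in the closed Euclidean ball of radius `√(a(0)² + b(0)² + c(0)²)`
for all later times in the interval. -/
theorem norm_sq_antitone (I : Set ℝ) (hI : I.OrdConnected) (a b c : ℝ → ℝ)
    (hsol : IsBachFlowSolution a b c I) :
    AntitoneOn (fun t => a t ^ 2 + b t ^ 2 + c t ^ 2) I ∧
    (0 ∈ I → ∀ t ∈ I, 0 ≤ t →
      a t ^ 2 + b t ^ 2 + c t ^ 2 ≤ a 0 ^ 2 + b 0 ^ 2 + c 0 ^ 2) := by
  have hconv : Convex ℝ I := convex_iff_ordConnected.mpr hI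
  have hder : ∀ t ∈ I, HasDerivAt (fun t => a t ^ 2 + b t ^ 2 + c t ^ 2)
      (2 * a t * Fa (a t) (b t) (c t) + 2 * b t * Fb (a t) (b t) (c t)
        + 2 * c t * Fc (a t) (b t) (c t)) t := by
    intro t ht
    obtain ⟨ha, hb, hc⟩ := hsol t ht
    have : HasDerivAt (fun t => a t ^ 2 + b t ^ 2 + c t ^ 2) _ t := ((ha.pow 2).add (hb.pow 2)).add (hc.pow 2)
    simpa [pow_one, mul_comm, mul_assoc, mul_left_comm] using this
  have hanti : AntitoneOn (fun t => a t ^ 2 + b t ^ 2 + c t ^ 2) I := by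
    apply antitoneOn_of_deriv_nonpos hconv
    · exact fun t ht => ((hder t ht).continuousAt).continuousWithinAt
    · exact fun t ht => ((hder t (interior_subset ht)).differentiableAt).differentiableWithinAt
    · intro t ht
      rw [(hder t (interior_subset ht)).deriv]
      exact deriv_nonpos (a t) (b t) (c t)
  exact ⟨hanti, fun h0 t ht htpos => hanti h0 ht htpos⟩
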